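/- In 3-valued Łukasiewicz logic, for all formulas A and B, A semantically entails B if and only if the formula ¬(A ⊃ ¬A) ⊃ B is valid. -/

import Mathlib

inductive Fml where
  | var : ℕ → Fml
  | and : Fml → Fml → Fml
  | or : Fml → Fml → Fml
  | imp : Fml → Fml → Fml
  | neg : Fml → Fml

def val (v : ℕ → ℚ) : Fml → ℚ
  | .var n => v n
  | .and a b => min (val v a) (val v b)
  | .or a b => max (val v a) (val v b)
  | .imp a b => min 1 (1 - val v a + val v b)
  | .neg a => 1 - val v a

/-- valuation into the 3 truth values of Ł₃ -/
def IsVal3 (v : ℕ → ℚ) : Prop := ∀ n, v n = 0 ∨ v n = 1/2 ∨ v n = 1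

/-- valuation into the k truth values {i/(k-1) : 0 ≤ i ≤ k-1} of Ł_k -/
def IsValK (k : ℕ) (v : ℕ → ℚ) : Prop :=
  ∀ n, ∃ i : ℕ, i ≤ k - 1 ∧ v n = (i : ℚ) / (k - 1 : ℕ)

def Valid3 (A : Fml) : Prop := ∀ v, IsVal3 v → val v A = 1

def Entails3 (A B : Fml) : Prop := ∀ v, IsVal3 v → val v A = 1 → val v B = 1

def ValidK (k : ℕ) (A : Fml) : Prop := ∀ v, IsValK k v → val v A = 1

def EntailsK (k : ℕ) (A B : Fml) : Prop :=
  ∀ v, IsValK k v → val v A = 1 → val v B = 1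

/-- A ⊃ (A ⊃ ( … ⊃ (A ⊃ B)…)) with n antecedent occurrences of A -/
def impIter (A B : Fml) : ℕ → Fml
  | 0 => B
  | n + 1 => Fml.imp A (impIter A B n)


lemma val_three {v : ℕ → ℚ} (hv : IsVal3 v) (A : Fml) :
    val v A = 0 ∨ val v A = 1/2 ∨ val v A = 1 := by
  induction A with
  | var n => exact hv n
  | and a b iha ihb =>
      simp only [val]
      rcases iha with h|h|h <;> rcases ihb with h'|h'|h' <;> rw [h, h'] <;> norm_num
  | or a b iha ihb =>
      simp only [val]
      rcases iha with h|h|h <;> rcases ihb with h'|h'|h' <;> rw [h, h'] <;> norm_num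
  | imp a b iha ihb =>
      simp only [val]
      rcases iha with h|h|h <;> rcases ihb with h'|h'|h' <;> rw [h, h'] <;> norm_num
  | neg a iha =>
      simp only [val]
      rcases iha with h|h|h <;> rw [h] <;> norm_num

theorem stmt1 (A B : Fml) :
    Entails3 A B ↔ Valid3 (Fml.imp (Fml.neg (Fml.imp A (Fml.neg A))) B) := by
  constructor
  · intro h v hv
    simp only [val]
    rcases val_three hv A with ha|ha|ha
    · rw [ha]; norm_num
      rcases val_three hv B with hb|hb|hb <;> rw [hb] <;> norm_num
    · rw [ha]; norm_num
      rcases val_three hv B with hb|hb|hb <;> rw [hb] <;> norm_num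
    · have hb := h v hv ha
      rw [ha, hb]; norm_num
  · intro h v hv ha
    have := h v hv
    simp only [val, ha] at this
    rcases val_three hv B with hb|hb|hb <;> rw [hb] at this ⊢ <;> norm_num at this
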